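/- Every element of PGL(2,F), F of characteristic p > 0, whose order is divisible by p has order exactly p. -/

import Mathlib

open Matrix Polynomial
open scoped LinearAlgebra.Projectivization MatrixGroups Pointwise

namespace PaperPGL

section Defs

variable (F : Type*) [Field F]

lemma glInj (g : GL (Fin 2) F) :
    Function.Injective ((g : Matrix (Fin 2) (Fin 2) F).mulVecLin) := by
  intro x y h
  have h2 := congrArg ((↑g⁻¹ : Matrix (Fin 2) (Fin 2) F).mulVecLin) h
  simp only [Matrix.mulVecLin_apply, Matrix.mulVec_mulVec] at h2
  rw [← Matrix.GeneralLinearGroup.coe_mul, inv_mul_cancel] at h2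
  simpa using h2

noncomputable instance : MulAction (GL (Fin 2) F) (ℙ F (Fin 2 → F)) where
  smul g x := Projectivization.map ((g : Matrix (Fin 2) (Fin 2) F).mulVecLin) (glInj F g) x
  one_smul x := by
    show Projectivization.map _ _ x = x
    have h1 : ((1 : GL (Fin 2) F) : Matrix (Fin 2) (Fin 2) F).mulVecLin
        = (LinearMap.id : (Fin 2 → F) →ₗ[F] (Fin 2 → F)) := by
      rw [Matrix.GeneralLinearGroup.coe_one, Matrix.mulVecLin_one]
    simp only [h1]
    rw [Projectivization.map_id]
    rfl
  mul_smul g h x := by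
    show Projectivization.map _ _ x = Projectivization.map _ _ (Projectivization.map _ _ x)
    have h1 : ((g * h : GL (Fin 2) F) : Matrix (Fin 2) (Fin 2) F).mulVecLin
        = ((g : Matrix (Fin 2) (Fin 2) F).mulVecLin).comp
          ((h : Matrix (Fin 2) (Fin 2) F).mulVecLin) := by
      rw [← Matrix.mulVecLin_mul, ← Matrix.GeneralLinearGroup.coe_mul]
    simp only [h1]
    rw [Projectivization.map_comp]
    rfl

/-- The image of `GL(2,F)` in the permutations of the projective line: `PGL(2,F)`
acting faithfully on `ℙ¹(F)`. -/
noncomputable def toPGL : GL (Fin 2) F →* Equiv.Perm (ℙ F (Fin 2 → F)) :=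
  MulAction.toPermHom _ _

/-- `PGL(2,F)` as a subgroup of the permutation group of the projective line `ℙ¹(F)`. -/
noncomputable def pgl : Subgroup (Equiv.Perm (ℙ F (Fin 2 → F))) :=
  (toPGL F).range

/-- Entrywise base change `GL(2,F) →* GL(2,K)` along a ring hom. -/
noncomputable def baseChange (F K : Type*) [Field F] [Field K] (phi : F →+* K) :
    GL (Fin 2) F →* GL (Fin 2) K :=
  Units.map phi.mapMatrix.toMonoidHom

end Defs

section Aux

variable {F : Type*} [Field F]

lemma glvec_ne_zero (g : GL (Fin 2) F) (v : Fin 2 → F) (hv : v ≠ 0) :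
    (g : Matrix (Fin 2) (Fin 2) F).mulVecLin v ≠ 0 :=
  fun hc => hv (glInj F g (hc.trans (LinearMap.map_zero _).symm))

lemma toPGL_apply_mk (g : GL (Fin 2) F) (v : Fin 2 → F) (hv : v ≠ 0) :
    toPGL F g (Projectivization.mk F v hv)
      = Projectivization.mk F ((g : Matrix (Fin 2) (Fin 2) F).mulVecLin v) (glvec_ne_zero g v hv) :=
  Projectivization.map_mk ((g : Matrix (Fin 2) (Fin 2) F).mulVecLin) (glInj F g) v hv

lemma toPGL_eq_one_of_scalar (g : GL (Fin 2) F) (c : F) (hc : c ≠ 0)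
    (h : (g : Matrix (Fin 2) (Fin 2) F) = c • 1) : toPGL F g = 1 := by
  ext x
  induction x using Projectivization.ind with
  | h v hv =>
    rw [Equiv.Perm.coe_one, id_eq]
    show toPGL F g (Projectivization.mk F v hv) = _
    rw [toPGL_apply_mk]
    rw [Projectivization.mk_eq_mk_iff']
    refine ⟨c, ?_⟩
    rw [Matrix.mulVecLin_apply, h, smul_mulVec, one_mulVec]

lemma scalar_of_toPGL_eq_one (g : GL (Fin 2) F)
    (h : toPGL F g = 1) : (g : Matrix (Fin 2) (Fin 2) F) = ((g : Matrix (Fin 2) (Fin 2) F) 0 0) • 1 := by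
  set A : Matrix (Fin 2) (Fin 2) F := (g : Matrix (Fin 2) (Fin 2) F) with hA
  have key : ∀ (v : Fin 2 → F) (hv : v ≠ 0), ∃ a : F, a • v = A *ᵥ v := by
    intro v hv
    have h2 : toPGL F g (Projectivization.mk F v hv) = Projectivization.mk F v hv := by
      rw [h]; rfl
    rw [toPGL_apply_mk, Projectivization.mk_eq_mk_iff'] at h2
    obtain ⟨a, ha⟩ := h2
    exact ⟨a, by rw [ha, Matrix.mulVecLin_apply]⟩
  have h0 : (Pi.single 0 1 : Fin 2 → F) ≠ 0 := by
    intro hc; have := congrFun hc 0; simp at this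
  have h1 : (Pi.single 1 1 : Fin 2 → F) ≠ 0 := by
    intro hc; have := congrFun hc 1; simp at this
  have h01 : (Pi.single 0 1 + Pi.single 1 1 : Fin 2 → F) ≠ 0 := by
    intro hc; have := congrFun hc 0; simp at this
  obtain ⟨a, ha⟩ := key _ h0
  obtain ⟨b, hb⟩ := key _ h1
  obtain ⟨d, hd⟩ := key _ h01
  have E01 : A 0 1 = 0 := by simpa using (congrFun hb 0).symm
  have E10 : A 1 0 = 0 := by simpa using (congrFun ha 1).symm
  have Ed0 : A 0 0 + A 0 1 = d := by simpa [mulVec_add] using (congrFun hd 0).symm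
  have Ed1 : A 1 0 + A 1 1 = d := by simpa [mulVec_add] using (congrFun hd 1).symm
  have E11 : A 1 1 = A 0 0 := by linear_combination Ed1 - Ed0 - E10 + E01
  ext i j
  fin_cases i <;> fin_cases j <;> simp [Matrix.one_apply, E01, E10, E11]

-- Cayley–Hamilton for 2×2 matrices, by direct computation.
lemma ch2 {R : Type*} [CommRing R] (M : Matrix (Fin 2) (Fin 2) R) :
    M * M = (M 0 0 + M 1 1) • M - (M 0 0 * M 1 1 - M 0 1 * M 1 0) • (1 : Matrix (Fin 2) (Fin 2) R) := by
  ext i j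
  fin_cases i <;> fin_cases j <;>
    simp [Matrix.mul_apply, Fin.sum_univ_two, Matrix.one_apply] <;> ring

-- Descent: a matrix which becomes scalar after an injective base change is scalar.
lemma descend {F K : Type*} [Field F] [Field K] (φ : F →+* K) (A : Matrix (Fin 2) (Fin 2) F)
    (s : K) (h : A.map φ = s • 1) : A = (A 0 0) • 1 := by
  have h00 : φ (A 0 0) = s := by
    have := congrFun (congrFun h 0) 0
    simpa [Matrix.one_apply] using this
  have h11 : A 1 1 = A 0 0 := by
    apply φ.injective
    have := congrFun (congrFun h 1) 1
    simpa [Matrix.one_apply, h00] using this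
  have h01 : A 0 1 = 0 := by
    apply φ.injective
    have := congrFun (congrFun h 0) 1
    simpa [Matrix.one_apply] using this
  have h10 : A 1 0 = 0 := by
    apply φ.injective
    have := congrFun (congrFun h 1) 0
    simpa [Matrix.one_apply] using this
  ext i j
  fin_cases i <;> fin_cases j <;> simp [Matrix.one_apply, h01, h10, h11]

-- the nonzero scalar from an invertible scalar matrix
lemma scalar_ne_zero {F : Type*} [Field F] (g : GL (Fin 2) F) (c : F)
    (h : (g : Matrix (Fin 2) (Fin 2) F) = c • 1) : c ≠ 0 := by
  intro hc
  subst hc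
  have hu : IsUnit ((g : Matrix (Fin 2) (Fin 2) F)) := g.isUnit
  rw [h, zero_smul] at hu
  rw [isUnit_zero_iff] at hu
  exact zero_ne_one hu

lemma factor2 {R : Type*} [CommRing R] (M : Matrix (Fin 2) (Fin 2) R) (a b : R)
    (hs : a + b = M 0 0 + M 1 1) (hm : a * b = M 0 0 * M 1 1 - M 0 1 * M 1 0) :
    (M - a • 1) * (M - b • 1) = 0 := by
  ext i j
  fin_cases i <;> fin_cases j
  · simp [Matrix.mul_apply, Fin.sum_univ_two, Matrix.one_apply]
    linear_combination (-(M 0 0)) * hs + hm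
  · simp [Matrix.mul_apply, Fin.sum_univ_two, Matrix.one_apply]
    linear_combination (-(M 0 1)) * hs
  · simp [Matrix.mul_apply, Fin.sum_univ_two, Matrix.one_apply]
    linear_combination (-(M 1 0)) * hs
  · simp [Matrix.mul_apply, Fin.sum_univ_two, Matrix.one_apply]
    linear_combination (-(M 1 1)) * hs + hm

lemma key {K : Type*} [Field K] [IsAlgClosed K] (p : ℕ) (hp : p.Prime) [CharP K p]
    (B : Matrix (Fin 2) (Fin 2) K) (hdet : B.det ≠ 0) (hB : ∀ t : K, B ≠ t • 1) :
    (∃ t : K, B ^ p = t • 1) ∨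
    ∃ α β : K, α ≠ β ∧ α ≠ 0 ∧ β ≠ 0 ∧
      ∀ k : ℕ, (∃ t : K, B ^ k = t • 1) ↔ α ^ k = β ^ k := by
  haveI : Fact p.Prime := ⟨hp⟩
  obtain ⟨tr, htr⟩ : ∃ t : K, t = B 0 0 + B 1 1 := ⟨_, rfl⟩
  obtain ⟨dd, hdd⟩ : ∃ d : K, d = B 0 0 * B 1 1 - B 0 1 * B 1 0 := ⟨_, rfl⟩
  -- find a root of the characteristic polynomial
  obtain ⟨α, hα⟩ : ∃ α : K, α * α - tr * α + dd = 0 := by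
    obtain ⟨z, hz⟩ := IsAlgClosed.exists_root (C 1 * X ^ 2 + C (-tr) * X + C dd)
      (by rw [Polynomial.degree_quadratic one_ne_zero]; norm_num)
    refine ⟨z, ?_⟩
    have := hz
    simp only [Polynomial.IsRoot, Polynomial.eval_add, Polynomial.eval_mul,
      Polynomial.eval_pow, Polynomial.eval_C, Polynomial.eval_X] at this
    linear_combination this
  obtain ⟨β, hβ⟩ : ∃ b : K, b = tr - α := ⟨_, rfl⟩
  have hs : α + β = B 0 0 + B 1 1 := by rw [hβ, htr]; ring
  have hm : α * β = B 0 0 * B 1 1 - B 0 1 * B 1 0 := by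
    rw [hβ]; rw [htr] at hα ⊢; rw [hdd] at hα; linear_combination -hα
  have hfact := factor2 B α β hs hm
  by_cases hab : α = β
  · -- double root: B = α•1 + N with N² = 0, so B^p = α^p • 1
    left
    rw [← hab] at hfact
    -- name N opaquely
    obtain ⟨N, hN⟩ : ∃ N : Matrix (Fin 2) (Fin 2) K, N = B - α • 1 := ⟨_, rfl⟩
    rw [← hN] at hfact
    have hBN : B = α • 1 + N := by rw [hN]; abel
    have hc : Commute (α • (1 : Matrix (Fin 2) (Fin 2) K)) N :=
      (Commute.one_left N).smul_left α
    have hNp : N ^ p = 0 := by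
      have h2 : N ^ 2 = 0 := by rw [pow_two]; exact hfact
      have h2p := hp.two_le
      have : p = 2 + (p - 2) := by omega
      rw [this, pow_add, h2, zero_mul]
    refine ⟨α ^ p, ?_⟩
    rw [hBN, add_pow_char_of_commute _ hc, hNp, add_zero, _root_.smul_pow, one_pow]
  · right
    have hfact2 := factor2 B β α (by linear_combination hs) (by linear_combination hm)
    have hα0 : α ≠ 0 := by
      intro h0
      rw [Matrix.det_fin_two] at hdet
      rw [h0, zero_mul] at hm
      exact hdet (by linear_combination -hm)
    have hβ0 : β ≠ 0 := by
      intro h0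
      rw [Matrix.det_fin_two] at hdet
      rw [h0, mul_zero] at hm
      exact hdet (by linear_combination -hm)
    obtain ⟨u, hu'⟩ : ∃ u : K, u = α - β := ⟨_, rfl⟩
    have hu : u ≠ 0 := by rw [hu']; exact sub_ne_zero.mpr hab
    obtain ⟨P, hP⟩ : ∃ P : Matrix (Fin 2) (Fin 2) K, P = u⁻¹ • (B - β • 1) := ⟨_, rfl⟩
    obtain ⟨Q, hQ⟩ : ∃ Q : Matrix (Fin 2) (Fin 2) K, Q = u⁻¹ • (α • 1 - B) := ⟨_, rfl⟩
    have hPQ1 : P + Q = 1 := by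
      have h1 : (B - β • 1) + (α • (1 : Matrix (Fin 2) (Fin 2) K) - B) = u • 1 := by
        rw [hu', sub_smul]
        abel
      rw [hP, hQ, ← smul_add, h1, smul_smul, inv_mul_cancel₀ hu, one_smul]
    have hPQ0 : P * Q = 0 := by
      rw [hP, hQ, smul_mul_assoc, mul_smul_comm,
        show (α • (1 : Matrix (Fin 2) (Fin 2) K) - B) = -(B - α • 1) from (neg_sub _ _).symm,
        mul_neg, hfact2, neg_zero, smul_zero, smul_zero]
    have hQP0 : Q * P = 0 := by
      rw [hP, hQ, smul_mul_assoc, mul_smul_comm,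
        show (α • (1 : Matrix (Fin 2) (Fin 2) K) - B) = -(B - α • 1) from (neg_sub _ _).symm,
        neg_mul, hfact, neg_zero, smul_zero, smul_zero]
    have hPP : P * P = P := by
      have h1 := congrArg (fun M => P * M) hPQ1
      simpa only [mul_add, hPQ0, add_zero, mul_one] using h1
    have hQQ : Q * Q = Q := by
      have h1 := congrArg (fun M => Q * M) hPQ1
      simpa only [mul_add, hQP0, zero_add, mul_one] using h1
    have hCH' : B * B = (α + β) • B - (α * β) • 1 := by rw [ch2 B, ← hs, ← hm]
    have hBP : B * P = α • P := by
      rw [hP, mul_smul_comm, mul_sub, mul_smul_comm, mul_one, hCH']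
      match_scalars <;> ring
    have hBQ : B * Q = β • Q := by
      rw [hQ, mul_smul_comm, mul_sub, mul_smul_comm, mul_one, hCH']
      match_scalars <;> ring
    have hk : ∀ k : ℕ, B ^ k = α ^ k • P + β ^ k • Q := by
      intro k
      induction k with
      | zero => simpa using hPQ1.symm
      | succ k ih =>
        rw [pow_succ' B, ih, mul_add, mul_smul_comm, mul_smul_comm, hBP, hBQ,
          smul_smul, smul_smul, ← pow_succ, ← pow_succ]
    have hPne : P ≠ 0 := by
      intro h0
      rw [hP, smul_eq_zero] at h0
      rcases h0 with h0 | h0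
      · exact hu (inv_eq_zero.mp h0)
      · exact hB β (by rw [← sub_eq_zero]; exact h0)
    have hQne : Q ≠ 0 := by
      intro h0
      rw [hQ, smul_eq_zero] at h0
      rcases h0 with h0 | h0
      · exact hu (inv_eq_zero.mp h0)
      · exact hB α (by rw [← sub_eq_zero, ← neg_sub, neg_eq_zero]; exact h0)
    refine ⟨α, β, hab, hα0, hβ0, fun k => ⟨?_, ?_⟩⟩
    · rintro ⟨t, ht⟩
      rw [hk k] at ht
      have hαt : α ^ k = t := by
        have h1 := congrArg (fun M => M * P) ht
        simp only [add_mul, smul_mul_assoc, hPP, hQP0, smul_zero, add_zero, one_mul] at h1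
        have h2 : (α ^ k - t) • P = 0 := by rw [sub_smul, h1, sub_self]
        rcases smul_eq_zero.mp h2 with h | h
        · exact sub_eq_zero.mp h
        · exact absurd h hPne
      have hβt : β ^ k = t := by
        have h1 := congrArg (fun M => M * Q) ht
        simp only [add_mul, smul_mul_assoc, hPQ0, hQQ, smul_zero, zero_add, one_mul] at h1
        have h2 : (β ^ k - t) • Q = 0 := by rw [sub_smul, h1, sub_self]
        rcases smul_eq_zero.mp h2 with h | h
        · exact sub_eq_zero.mp h
        · exact absurd h hQne
      rw [hαt, hβt]
    · intro h
      exact ⟨α ^ k, by rw [hk k, ← h, ← smul_add, hPQ1]⟩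

lemma toPGL_pow_eq_one {F : Type*} [Field F] (g : GL (Fin 2) F) (k : ℕ) (c : F)
    (h : ((g : Matrix (Fin 2) (Fin 2) F)) ^ k = c • 1) : (toPGL F g) ^ k = 1 := by
  have h1 : ((g ^ k : GL (Fin 2) F) : Matrix (Fin 2) (Fin 2) F) = c • 1 := by
    rw [Units.val_pow_eq_pow_val]; exact h
  rw [← map_pow]
  exact toPGL_eq_one_of_scalar _ c (scalar_ne_zero (g ^ k) c h1) h1

lemma map_smul_one {F K : Type*} [Field F] [Field K] (φ : F →+* K) (c : F) :
    ((c • 1 : Matrix (Fin 2) (Fin 2) F).map φ) = φ c • (1 : Matrix (Fin 2) (Fin 2) K) := by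
  ext i j
  simp [Matrix.map_apply, Matrix.one_apply, apply_ite φ, mul_ite, mul_one, mul_zero]

end Aux

/-- Every element of finite order of `PGL(2,F)`, `char F = p > 0`, whose order is divisible
by `p` has order exactly `p`. -/
theorem stmt8 (F : Type*) [Field F] (p : ℕ) (hp : p.Prime) [CharP F p]
    (σ : Equiv.Perm (ℙ F (Fin 2 → F))) (hσ : σ ∈ pgl F)
    (hfin : IsOfFinOrder σ) (hdvd : p ∣ orderOf σ) :
    orderOf σ = p := by
  haveI : Fact p.Prime := ⟨hp⟩
  obtain ⟨g, hg⟩ := hσ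
  have hn0 : orderOf σ ≠ 0 := hfin.orderOf_pos.ne'
  by_cases hsc : (g : Matrix (Fin 2) (Fin 2) F) = ((g : Matrix (Fin 2) (Fin 2) F) 0 0) • 1
  · exfalso
    have h1 : toPGL F g = 1 :=
      toPGL_eq_one_of_scalar g _ (scalar_ne_zero g _ hsc) hsc
    rw [hg] at h1
    rw [h1, orderOf_one] at hdvd
    exact hp.ne_one (Nat.dvd_one.mp hdvd)
  · set K := AlgebraicClosure F with hK
    let φ : F →+* K := algebraMap F K
    haveI : CharP K p := charP_of_injective_algebraMap (algebraMap F K).injective p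
    set A : Matrix (Fin 2) (Fin 2) F := (g : Matrix (Fin 2) (Fin 2) F) with hA
    have hmap : ∀ k : ℕ, (A.map φ) ^ k = (A ^ k).map φ := by
      intro k
      rw [← RingHom.mapMatrix_apply, ← RingHom.mapMatrix_apply, map_pow]
    have hdet : (A.map φ).det ≠ 0 := by
      rw [← RingHom.mapMatrix_apply, ← RingHom.map_det]
      have : IsUnit A.det := (Matrix.isUnit_iff_isUnit_det A).mp g.isUnit
      exact fun hc => this.ne_zero ((algebraMap F K).injective (by rw [hc, map_zero]))
    have hBns : ∀ t : K, A.map φ ≠ t • 1 := by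
      intro t ht
      exact hsc (descend φ A t ht)
    -- turn "σ^k = 1" into "A^k is scalar" and back
    have fwd : ∀ k : ℕ, σ ^ k = 1 → ∃ t : K, (A.map φ) ^ k = t • 1 := by
      intro k hk
      have h1 : toPGL F (g ^ k) = 1 := by rw [map_pow, hg, hk]
      have h2 := scalar_of_toPGL_eq_one (g ^ k) h1
      rw [Units.val_pow_eq_pow_val] at h2
      refine ⟨φ ((A ^ k) 0 0), ?_⟩
      rw [hmap k]
      conv_lhs => rw [h2]
      rw [map_smul_one]
    have bwd : ∀ k : ℕ, (∃ t : K, (A.map φ) ^ k = t • 1) → σ ^ k = 1 := by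
      rintro k ⟨t, ht⟩
      rw [hmap k] at ht
      have h2 : A ^ k = ((A ^ k) 0 0) • 1 := descend φ (A ^ k) t ht
      have := toPGL_pow_eq_one g k _ h2
      rwa [hg] at this
    rcases key p hp (A.map φ) hdet hBns with ⟨t, ht⟩ | ⟨α, β, hab, hα0, hβ0, hiff⟩
    · have hσp : σ ^ p = 1 := bwd p ⟨t, ht⟩
      exact Nat.dvd_antisymm (orderOf_dvd_of_pow_eq_one hσp) hdvd
    · exfalso
      have hn := hiff (orderOf σ) |>.mp (fwd _ (pow_orderOf_eq_one σ))
      set γ : Kˣ := Units.mk0 (α * β⁻¹) (mul_ne_zero hα0 (inv_ne_zero hβ0)) with hγ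
      have hγn : γ ^ orderOf σ = 1 := by
        apply Units.ext
        rw [Units.val_pow_eq_pow_val, Units.val_one, hγ, Units.val_mk0, mul_pow, inv_pow,
          hn, mul_inv_cancel₀ (pow_ne_zero _ hβ0)]
      have hγfin : IsOfFinOrder γ :=
        isOfFinOrder_iff_pow_eq_one.mpr ⟨orderOf σ, Nat.pos_of_ne_zero hn0, hγn⟩
      have hm0 : orderOf γ ≠ 0 := hγfin.orderOf_pos.ne'
      have hαβm : α ^ orderOf γ = β ^ orderOf γ := by
        have h1 := congrArg Units.val (pow_orderOf_eq_one γ)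
        rw [Units.val_pow_eq_pow_val, Units.val_one, hγ, Units.val_mk0, mul_pow, inv_pow] at h1
        rw [mul_inv_eq_one₀ (pow_ne_zero _ hβ0)] at h1
        exact h1
      have hσm : σ ^ orderOf γ = 1 := bwd _ (hiff _ |>.mpr hαβm)
      have hnm : orderOf σ ∣ orderOf γ := orderOf_dvd_of_pow_eq_one hσm
      have hpm : p ∣ orderOf γ := hdvd.trans hnm
      -- δ = γ^(m/p) is a nontrivial p-th root of unity: impossible in char p
      have hδp : (γ ^ (orderOf γ / p)) ^ p = 1 := by
        rw [← pow_mul, Nat.div_mul_cancel hpm, pow_orderOf_eq_one]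
      have hδ1 : γ ^ (orderOf γ / p) = 1 := by
        apply Units.ext
        have h1 := congrArg Units.val hδp
        rw [Units.val_pow_eq_pow_val, Units.val_one] at h1
        have h0 : ((γ ^ (orderOf γ / p) : Kˣ) : K) - 1 = 0 := by
          have h2 : (((γ ^ (orderOf γ / p) : Kˣ) : K) - 1) ^ p = 0 := by
            rw [sub_pow_char, h1, one_pow, sub_self]
          exact pow_eq_zero_iff hp.ne_zero |>.mp h2
        rw [Units.val_one]
        exact sub_eq_zero.mp h0
      have hdvd2 : orderOf γ ∣ orderOf γ / p := orderOf_dvd_of_pow_eq_one hδ1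
      have hlt : orderOf γ / p < orderOf γ :=
        Nat.div_lt_self (Nat.pos_of_ne_zero hm0) hp.one_lt
      have hz := Nat.eq_zero_of_dvd_of_lt hdvd2 hlt
      have h3 := Nat.div_mul_cancel hpm
      rw [hz, zero_mul] at h3
      exact hm0 h3.symm

end PaperPGL
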